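/- Let n, d ≥ 1 and let ℓ_1,…,ℓ_n : ℝᵈ → ℝ be differentiable with differentiable gradient maps g_i = ∇ℓ_i. Define G(w,θ) = ∑_{i=1}^n w_i g_i(θ), let θ* : ℝⁿ → ℝᵈ be differentiable at w₀ with θ₀ = θ*(w₀), suppose G(w, θ*(w)) = 0 for all w, and suppose H = ∑_{i=1}^n (w₀)_i Dg_i(θ₀) : ℝᵈ → ℝᵈ is invertible. Let R : ℝᵈ → ℝ be differentiable at θ₀ (the target-set risk). Then for each i ∈ {1,…,n}, the directional derivative of w ↦ R(θ*(w)) at w₀ along the i-th coordinate direction equals −⟨∇R(θ₀), H⁻¹ ∇ℓ_i(θ₀)⟩. -/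

import Mathlib

open RealInnerProductSpace

/-- Influence-function formula for the target risk:
`d R(θ*(w))/d w_i = −⟨∇R(θ₀), H⁻¹ ∇ℓ_i(θ₀)⟩` at `w₀`, where `θ₀ = θ*(w₀)`, each loss
`ℓ_i` has differentiable gradient map `g_i`, `∑_i w_i g_i(θ*(w)) = 0` for all `w`, `θ*`
is differentiable at `w₀`, the Hessian `H = ∑_i (w₀)_i Dg_i(θ₀)` is invertible, and the
target risk `R` is differentiable at `θ₀`. -/
theorem influence_function_risk_derivative (n d : ℕ) (hn : 1 ≤ n) (hd : 1 ≤ d)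
    (ℓ : Fin n → EuclideanSpace ℝ (Fin d) → ℝ)
    (g : Fin n → EuclideanSpace ℝ (Fin d) → EuclideanSpace ℝ (Fin d))
    (hgrad : ∀ i θ, HasGradientAt (ℓ i) (g i θ) θ)
    (hgdiff : ∀ i, Differentiable ℝ (g i))
    (θstar : (Fin n → ℝ) → EuclideanSpace ℝ (Fin d)) (w₀ : Fin n → ℝ)
    (hθdiff : DifferentiableAt ℝ θstar w₀)
    (hopt : ∀ w : Fin n → ℝ, ∑ i, w i • g i (θstar w) = 0)
    (H : EuclideanSpace ℝ (Fin d) ≃L[ℝ] EuclideanSpace ℝ (Fin d))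
    (hH : (H : EuclideanSpace ℝ (Fin d) →L[ℝ] EuclideanSpace ℝ (Fin d))
      = ∑ i, w₀ i • fderiv ℝ (g i) (θstar w₀))
    (R : EuclideanSpace ℝ (Fin d) → ℝ)
    (hR : DifferentiableAt ℝ R (θstar w₀)) :
    ∀ i : Fin n,
      fderiv ℝ (fun w => R (θstar w)) w₀ (Pi.single i 1)
        = -⟪gradient R (θstar w₀), H.symm (g i (θstar w₀))⟫ := by
  intro i
  -- derivative of the first-order-condition map
  have hterm : ∀ j : Fin n, HasFDerivAt (fun w : Fin n → ℝ => w j • g j (θstar w))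
      (w₀ j • ((fderiv ℝ (g j) (θstar w₀)).comp (fderiv ℝ θstar w₀))
        + (ContinuousLinearMap.proj j : (Fin n → ℝ) →L[ℝ] ℝ).smulRight (g j (θstar w₀))) w₀ := by
    intro j
    have hc : HasFDerivAt (fun w : Fin n → ℝ => w j)
        (ContinuousLinearMap.proj j : (Fin n → ℝ) →L[ℝ] ℝ) w₀ :=
      (ContinuousLinearMap.proj j : (Fin n → ℝ) →L[ℝ] ℝ).hasFDerivAt
    have hf : HasFDerivAt (fun w => g j (θstar w)) ((fderiv ℝ (g j) (θstar w₀)).comp (fderiv ℝ θstar w₀)) w₀ :=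
      ((hgdiff j (θstar w₀)).hasFDerivAt).comp w₀ hθdiff.hasFDerivAt
    exact hc.smul hf
  have hsum : HasFDerivAt (fun w : Fin n → ℝ => ∑ j, w j • g j (θstar w))
      (∑ j, (w₀ j • ((fderiv ℝ (g j) (θstar w₀)).comp (fderiv ℝ θstar w₀))
        + (ContinuousLinearMap.proj j : (Fin n → ℝ) →L[ℝ] ℝ).smulRight (g j (θstar w₀)))) w₀ :=
    HasFDerivAt.fun_sum fun j _ => hterm j
  have hzero : HasFDerivAt (fun w : Fin n → ℝ => ∑ j, w j • g j (θstar w))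
      (0 : (Fin n → ℝ) →L[ℝ] EuclideanSpace ℝ (Fin d)) w₀ := by
    have : (fun w : Fin n → ℝ => ∑ j, w j • g j (θstar w)) = fun _ => (0 : EuclideanSpace ℝ (Fin d)) := by
      funext w; exact hopt w
    rw [this]; exact hasFDerivAt_const 0 w₀
  have hLzero := hsum.unique hzero
  have key : (fderiv ℝ θstar w₀) (Pi.single i 1) = -H.symm (g i (θstar w₀)) := by
    have happ := congrArg (fun L : (Fin n → ℝ) →L[ℝ] EuclideanSpace ℝ (Fin d) => L (Pi.single i 1)) hLzero
    simp only [ContinuousLinearMap.sum_apply, ContinuousLinearMap.add_apply,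
      ContinuousLinearMap.smul_apply, ContinuousLinearMap.comp_apply,
      ContinuousLinearMap.smulRight_apply, ContinuousLinearMap.proj_apply,
      ContinuousLinearMap.zero_apply, Finset.sum_add_distrib] at happ
    have h2 : ∑ j : Fin n, (Pi.single i (1:ℝ) : Fin n → ℝ) j • g j (θstar w₀) = g i (θstar w₀) := by
      rw [Finset.sum_eq_single i]
      · simp
      · intro b _ hb; simp [Pi.single_apply, hb]
      · intro h; exact absurd (Finset.mem_univ i) h
    rw [h2] at happ
    have h1 : ∑ j : Fin n, w₀ j • (fderiv ℝ (g j) (θstar w₀)) ((fderiv ℝ θstar w₀) (Pi.single i 1))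
        = H ((fderiv ℝ θstar w₀) (Pi.single i 1)) := by
      rw [show (H ((fderiv ℝ θstar w₀) (Pi.single i 1))) =
          (H : EuclideanSpace ℝ (Fin d) →L[ℝ] EuclideanSpace ℝ (Fin d)) ((fderiv ℝ θstar w₀) (Pi.single i 1)) from rfl, hH]
      simp
    rw [h1] at happ
    have : H ((fderiv ℝ θstar w₀) (Pi.single i 1)) = -(g i (θstar w₀)) := by linear_combination (norm := module) happ
    calc (fderiv ℝ θstar w₀) (Pi.single i 1) = H.symm (H ((fderiv ℝ θstar w₀) (Pi.single i 1))) := (H.symm_apply_apply _).symm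
      _ = H.symm (-(g i (θstar w₀))) := by rw [this]
      _ = -H.symm (g i (θstar w₀)) := map_neg _ _
  -- chain rule
  have hcomp : fderiv ℝ (fun w => R (θstar w)) w₀ = (fderiv ℝ R (θstar w₀)).comp (fderiv ℝ θstar w₀) :=
    fderiv_comp w₀ hR hθdiff
  have hgradR : fderiv ℝ R (θstar w₀) = InnerProductSpace.toDual ℝ (EuclideanSpace ℝ (Fin d)) (gradient R (θstar w₀)) :=
    (hR.hasGradientAt.hasFDerivAt).fderiv
  rw [hcomp]
  simp only [ContinuousLinearMap.comp_apply, key, hgradR, map_neg]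
  rw [InnerProductSpace.toDual_apply_apply]
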